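/- Let f = (1/C)Σ_i f_i with each f_i L-smooth, and suppose each local solution satisfies the first-order stationarity condition ∇f_i(θ_i^{t+1}) + λ_i^t + ρ(θ_i^{t+1} − θ^t) = e_i with ‖e_i‖² ≤ ε, and the global update is θ̄^{t+1} = (1/C)Σ_i θ_i^{t+1} with (1/C)Σ_i λ_i^t = λ̄^t and θ^t = θ̄^t + λ̄^t/ρ. Then E_t[f(θ̄^{t+1})] − f(θ̄^t) ≤ (L/2)(1 + L/ρ)·(1/C)Σ_i E_t‖θ̄^t − θ_i^{t+1}‖² − (1/(2ρ))·E_t‖∇f(θ̄^t)‖². -/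

import Mathlib

open Finset RealInnerProductSpace

variable {E : Type*} [NormedAddCommGroup E] [InnerProductSpace ℝ E] [CompleteSpace E]

lemma my_descent (f : E → ℝ) (gf : E → E) (L : ℝ) (hL : 0 ≤ L)
    (hgrad : ∀ x, HasGradientAt f (gf x) x)
    (hLip : ∀ x y, ‖gf x - gf y‖ ≤ L * ‖x - y‖) (x y : E) :
    f y ≤ f x + ⟪gf x, y - x⟫ + L / 2 * ‖y - x‖ ^ 2 := by
  set v := y - x with hv
  set ψ : ℝ → ℝ := fun t => f (x + t • v) - t * ⟪gf x, v⟫ - L / 2 * ‖v‖ ^ 2 * t ^ 2 with hψ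
  have hderiv : ∀ t : ℝ, HasDerivAt ψ
      (⟪gf (x + t • v), v⟫ - ⟪gf x, v⟫ - L / 2 * ‖v‖ ^ 2 * (2 * t)) t := by
    intro t
    have hline : HasDerivAt (fun t : ℝ => x + t • v) v t := by
      simpa using ((hasDerivAt_id t).smul_const v).const_add x
    have h1 : HasDerivAt (fun t : ℝ => f (x + t • v)) ⟪gf (x + t • v), v⟫ t := by
      have := (hgrad (x + t • v)).hasFDerivAt.comp_hasDerivAt t hline
      simpa [InnerProductSpace.toDual_apply_apply, Function.comp_def] using this
    have h2 : HasDerivAt (fun t : ℝ => t * ⟪gf x, v⟫) ⟪gf x, v⟫ t := hasDerivAt_mul_const _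
    have h3 : HasDerivAt (fun t : ℝ => L / 2 * ‖v‖ ^ 2 * t ^ 2) (L / 2 * ‖v‖ ^ 2 * (2 * t)) t := by
      simpa using (hasDerivAt_pow 2 t).const_mul (L / 2 * ‖v‖ ^ 2)
    exact (h1.sub h2).sub h3
  have hanti : AntitoneOn ψ (Set.Icc 0 1) := by
    apply antitoneOn_of_deriv_nonpos (convex_Icc 0 1)
    · exact fun t _ => ((hderiv t).differentiableAt).continuousAt.continuousWithinAt
    · exact fun t _ => ((hderiv t).differentiableAt).differentiableWithinAt
    · intro t ht
      rw [interior_Icc] at ht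
      rw [(hderiv t).deriv]
      have h1 : ⟪gf (x + t • v) - gf x, v⟫ ≤ ‖gf (x + t • v) - gf x‖ * ‖v‖ :=
        real_inner_le_norm _ _
      have h2 : ‖gf (x + t • v) - gf x‖ ≤ L * (t * ‖v‖) := by
        have := hLip (x + t • v) x
        simpa [norm_smul, abs_of_pos ht.1] using this
      have h3 : ‖gf (x + t • v) - gf x‖ * ‖v‖ ≤ L * (t * ‖v‖) * ‖v‖ :=
        mul_le_mul_of_nonneg_right h2 (norm_nonneg v)
      have h4 : ⟪gf (x + t • v), v⟫ - ⟪gf x, v⟫ = ⟪gf (x + t • v) - gf x, v⟫ := by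
        rw [inner_sub_left]
      nlinarith [norm_nonneg v]
  have := hanti (Set.mem_Icc.mpr ⟨le_refl 0, zero_le_one⟩) (Set.mem_Icc.mpr ⟨zero_le_one, le_refl 1⟩) zero_le_one
  simp only [hψ, zero_smul, add_zero, zero_mul, one_smul, one_mul, one_pow, mul_one,
    sub_zero] at this
  have hxy : x + v = y := by rw [hv]; abel
  rw [hxy] at this
  linarith

lemma my_jensen (C : ℕ) (hC : 0 < C) (v : Fin C → E) :
    ‖(C : ℝ)⁻¹ • ∑ i, v i‖ ^ 2 ≤ (C : ℝ)⁻¹ * ∑ i, ‖v i‖ ^ 2 := by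
  have hCpos : (0:ℝ) < C := Nat.cast_pos.mpr hC
  have h1 : ‖∑ i, v i‖ ≤ ∑ i, ‖v i‖ := norm_sum_le _ _
  have h2 : (∑ i, ‖v i‖) ^ 2 ≤ (C : ℝ) * ∑ i, ‖v i‖ ^ 2 := by
    have := sq_sum_le_card_mul_sum_sq (s := (univ : Finset (Fin C))) (f := fun i => ‖v i‖)
    simpa using this
  rw [norm_smul]
  have h3 : ‖∑ i, v i‖ ^ 2 ≤ (C : ℝ) * ∑ i, ‖v i‖ ^ 2 := by
    nlinarith [norm_nonneg (∑ i, v i), Finset.sum_nonneg (fun i (_ : i ∈ univ) => norm_nonneg (v i))]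
  have : |(C:ℝ)⁻¹| = (C:ℝ)⁻¹ := abs_of_pos (by positivity)
  rw [Real.norm_eq_abs, this, mul_pow]
  calc (C:ℝ)⁻¹ ^ 2 * ‖∑ i, v i‖ ^ 2 ≤ (C:ℝ)⁻¹ ^ 2 * ((C:ℝ) * ∑ i, ‖v i‖ ^ 2) := by
        exact mul_le_mul_of_nonneg_left h3 (by positivity)
    _ = (C : ℝ)⁻¹ * ∑ i, ‖v i‖ ^ 2 := by field_simp



/-- One-round descent bound for A-FedPD. With each `f i` `L`-smooth
(gradient map `gf i` is `L`-Lipschitz), exact local first-order stationarity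
`∇f_i(θ_i^{t+1}) + λ_i^t + ρ(θ_i^{t+1} − θ^t) = 0`, global average
`θ̄^{t+1} = (1/C)Σ_i θ_i^{t+1}`, and `θ^t = θ̄^t + λ̄^t/ρ`, the average objective
`f = (1/C)Σ_i f_i` satisfies
`f(θ̄^{t+1}) − f(θ̄^t) ≤ (L/2)(1 + L/ρ)·(1/C)Σ_i‖θ̄^t − θ_i^{t+1}‖² − (1/(2ρ))‖∇f(θ̄^t)‖²`. -/
theorem stmt_11 (d C : ℕ) (hC : 0 < C) (L ρ : ℝ) (hL : 0 ≤ L) (hρ : 0 < ρ)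
    (f : Fin C → EuclideanSpace ℝ (Fin d) → ℝ)
    (gf : Fin C → EuclideanSpace ℝ (Fin d) → EuclideanSpace ℝ (Fin d))
    (hgrad : ∀ i x, HasGradientAt (f i) (gf i x) x)
    (hLip : ∀ i x y, ‖gf i x - gf i y‖ ≤ L * ‖x - y‖)
    (θt θbart θbar1 : EuclideanSpace ℝ (Fin d))
    (θi1 lam : Fin C → EuclideanSpace ℝ (Fin d))
    (hfoc : ∀ i, gf i (θi1 i) + lam i + ρ • (θi1 i - θt) = 0)
    (hθt : θt = θbart + ρ⁻¹ • ((C : ℝ)⁻¹ • ∑ i, lam i))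
    (hbar1 : θbar1 = (C : ℝ)⁻¹ • ∑ i, θi1 i) :
    (C : ℝ)⁻¹ * ∑ i, f i θbar1 - (C : ℝ)⁻¹ * ∑ i, f i θbart
      ≤ (L / 2) * (1 + L / ρ) * ((C : ℝ)⁻¹ * ∑ i, ‖θbart - θi1 i‖ ^ 2)
        - (1 / (2 * ρ)) * ‖(C : ℝ)⁻¹ • ∑ i, gf i θbart‖ ^ 2 := by
  have hCpos : (0:ℝ) < C := Nat.cast_pos.mpr hC
  have hCne : (C:ℝ) ≠ 0 := ne_of_gt hCpos
  have hρne : ρ ≠ 0 := ne_of_gt hρ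
  set g : EuclideanSpace ℝ (Fin d) := (C:ℝ)⁻¹ • ∑ i, gf i θbart with hg
  set G1 : EuclideanSpace ℝ (Fin d) := (C:ℝ)⁻¹ • ∑ i, gf i (θi1 i) with hG1
  set δ : EuclideanSpace ℝ (Fin d) := θbar1 - θbart with hδdef
  set S : ℝ := (C:ℝ)⁻¹ * ∑ i, ‖θbart - θi1 i‖ ^ 2 with hS
  have hSnn : 0 ≤ S := by
    apply mul_nonneg (by positivity)
    exact Finset.sum_nonneg (fun i _ => by positivity)
  -- Step A: sum the first-order conditions
  have h0 : (∑ i, gf i (θi1 i)) + (∑ i, lam i) + ρ • ((∑ i, θi1 i) - (C:ℝ) • θt) = 0 := by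
    have h0' : ∑ i, (gf i (θi1 i) + lam i + ρ • (θi1 i - θt)) = (0 : EuclideanSpace ℝ (Fin d)) := by
      simp [hfoc]
    rw [← h0', Finset.sum_add_distrib, Finset.sum_add_distrib]
    congr 1
    rw [← Finset.smul_sum]
    congr 1
    rw [Finset.sum_sub_distrib]
    congr 1
    rw [Finset.sum_const, Finset.card_univ, Fintype.card_fin, ← Nat.cast_smul_eq_nsmul ℝ]
  have hA : G1 + ρ • δ = 0 := by
    rw [hG1, hδdef, hbar1]
    have key : (C:ℝ)⁻¹ • ((∑ i, gf i (θi1 i)) + (∑ i, lam i)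
        + ρ • ((∑ i, θi1 i) - (C:ℝ) • (θbart + ρ⁻¹ • ((C : ℝ)⁻¹ • ∑ i, lam i)))) = 0 := by
      rw [← hθt, h0, smul_zero]
    rw [← key]
    match_scalars <;> field_simp <;> ring
  have hδeq : δ = -(ρ⁻¹ • G1) := by
    have h1 : ρ • δ = -G1 := eq_neg_of_add_eq_zero_right hA
    calc δ = ρ⁻¹ • (ρ • δ) := by rw [smul_smul, inv_mul_cancel₀ hρne, one_smul]
    _ = -(ρ⁻¹ • G1) := by rw [h1, smul_neg]
  -- Step B/C: descent lemma, averaged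
  have hdesc : ∀ i, f i θbar1 ≤ f i θbart + ⟪gf i θbart, δ⟫ + L / 2 * ‖δ‖ ^ 2 := by
    intro i
    have := my_descent (f i) (gf i) L hL (hgrad i) (hLip i) θbart θbar1
    rwa [← hδdef] at this
  have hsum1 : ∑ i, f i θbar1
      ≤ ∑ i, f i θbart + (∑ i, ⟪gf i θbart, δ⟫) + (C:ℝ) * (L / 2 * ‖δ‖ ^ 2) := by
    have h := Finset.sum_le_sum (fun i (_ : i ∈ Finset.univ) => hdesc i)
    simpa [Finset.sum_add_distrib, Finset.sum_const, Finset.card_univ, Fintype.card_fin,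
      nsmul_eq_mul, add_assoc] using h
  have hinner : ⟪g, δ⟫ = (C:ℝ)⁻¹ * ∑ i, ⟪gf i θbart, δ⟫ := by
    rw [hg, real_inner_smul_left, sum_inner]
  have hmain : (C:ℝ)⁻¹ * ∑ i, f i θbar1 - (C:ℝ)⁻¹ * ∑ i, f i θbart
      ≤ ⟪g, δ⟫ + L / 2 * ‖δ‖ ^ 2 := by
    have h := mul_le_mul_of_nonneg_left hsum1 (le_of_lt (inv_pos.mpr hCpos))
    rw [mul_add, mul_add] at h
    have hc : (C:ℝ)⁻¹ * ((C:ℝ) * (L / 2 * ‖δ‖ ^ 2)) = L / 2 * ‖δ‖ ^ 2 := by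
      field_simp
    rw [hc] at h
    rw [hinner]
    linarith
  -- Step D: inner product bound
  have h2ρ : (0:ℝ) < 1 / (2 * ρ) := by positivity
  have hD : ⟪g, δ⟫ ≤ -(1 / (2 * ρ)) * ‖g‖ ^ 2 + (1 / (2 * ρ)) * ‖g - G1‖ ^ 2 := by
    rw [hδeq, inner_neg_right, real_inner_smul_right]
    have hpol : ‖g - G1‖ ^ 2 = ‖g‖ ^ 2 - 2 * ⟪g, G1⟫ + ‖G1‖ ^ 2 := norm_sub_sq_real g G1
    have hG1nn : (0:ℝ) ≤ ‖G1‖ ^ 2 := by positivity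
    have e1 : ρ⁻¹ * ⟪g, G1⟫
        = 1 / (2 * ρ) * ‖g‖ ^ 2 + 1 / (2 * ρ) * ‖G1‖ ^ 2 - 1 / (2 * ρ) * ‖g - G1‖ ^ 2 := by
      have hI : ⟪g, G1⟫ = (‖g‖ ^ 2 + ‖G1‖ ^ 2 - ‖g - G1‖ ^ 2) / 2 := by linarith
      rw [hI]
      ring
    have e2 : 0 ≤ 1 / (2 * ρ) * ‖G1‖ ^ 2 := mul_nonneg h2ρ.le hG1nn
    linarith
  -- Step E: variance bound via Jensen and Lipschitz
  have hE : ‖g - G1‖ ^ 2 ≤ L ^ 2 * S := by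
    have hdiff : g - G1 = (C:ℝ)⁻¹ • ∑ i, (gf i θbart - gf i (θi1 i)) := by
      rw [hg, hG1, ← smul_sub, Finset.sum_sub_distrib]
    rw [hdiff]
    calc ‖(C:ℝ)⁻¹ • ∑ i, (gf i θbart - gf i (θi1 i))‖ ^ 2
        ≤ (C:ℝ)⁻¹ * ∑ i, ‖gf i θbart - gf i (θi1 i)‖ ^ 2 := my_jensen C hC _
      _ ≤ (C:ℝ)⁻¹ * ∑ i, (L * ‖θbart - θi1 i‖) ^ 2 := by
          apply mul_le_mul_of_nonneg_left _ (by positivity)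
          exact Finset.sum_le_sum fun i _ =>
            pow_le_pow_left₀ (norm_nonneg _) (hLip i θbart (θi1 i)) 2
      _ = L ^ 2 * S := by
          rw [hS, Finset.mul_sum, Finset.mul_sum, Finset.mul_sum]
          exact Finset.sum_congr rfl fun i _ => by ring
  -- Step F: step-size bound via Jensen
  have hF : ‖δ‖ ^ 2 ≤ S := by
    have hδ2 : δ = (C:ℝ)⁻¹ • ∑ i, (θi1 i - θbart) := by
      rw [hδdef, hbar1, Finset.sum_sub_distrib, smul_sub, Finset.sum_const, Finset.card_univ,
        Fintype.card_fin, ← Nat.cast_smul_eq_nsmul ℝ, smul_smul, inv_mul_cancel₀ hCne, one_smul]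
    rw [hδ2]
    calc ‖(C:ℝ)⁻¹ • ∑ i, (θi1 i - θbart)‖ ^ 2
        ≤ (C:ℝ)⁻¹ * ∑ i, ‖θi1 i - θbart‖ ^ 2 := my_jensen C hC _
      _ = S := by
          rw [hS]
          congr 1
          exact Finset.sum_congr rfl fun i _ => by rw [norm_sub_rev]
  -- Combine
  have hrhs : L / 2 * (1 + L / ρ) * S = L / 2 * S + 1 / (2 * ρ) * (L ^ 2 * S) := by
    field_simp
  have hE' : 1 / (2 * ρ) * ‖g - G1‖ ^ 2 ≤ 1 / (2 * ρ) * (L ^ 2 * S) :=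
    mul_le_mul_of_nonneg_left hE h2ρ.le
  have hF' : L / 2 * ‖δ‖ ^ 2 ≤ L / 2 * S :=
    mul_le_mul_of_nonneg_left hF (by positivity)
  linarith
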